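/- If v is a vertex of a graph G with deg(v) ≥ 2, then γ_sp(G ⊙ v) ≤ γ_sp(G) + ⌊deg(v)/2⌋ − 1. -/

import Mathlib

/-- `S` is a super dominating set of `G`: it is dominating, and for every `u ∉ S`
there is `v ∈ S` whose neighbours outside `S` are exactly `{u}`. -/
def IsSuperDominatingSet {V : Type*} (G : SimpleGraph V) (S : Finset V) : Prop :=
  (∀ u ∉ S, ∃ v ∈ S, G.Adj v u) ∧
  ∀ u ∉ S, ∃ v ∈ S, ∀ w, (G.Adj v w ∧ w ∉ S) ↔ w = u

/-- The super domination number of `G`. -/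
noncomputable def superDominationNumber {V : Type*} [Fintype V] (G : SimpleGraph V) : ℕ :=
  sInf {n | ∃ S : Finset V, IsSuperDominatingSet G S ∧ S.card = n}

/-- `G ⊙ v`: the graph obtained from `G` by removing all edges between
any pair of neighbours of `v`. -/
def odot {V : Type*} (G : SimpleGraph V) (v : V) : SimpleGraph V where
  Adj a b := G.Adj a b ∧ ¬(G.Adj v a ∧ G.Adj v b)
  symm := ⟨fun a b ⟨h1, h2⟩ => ⟨h1.symm, fun ⟨p, q⟩ => h2 ⟨q, p⟩⟩⟩
  loopless := ⟨fun a ⟨h, _⟩ => G.irrefl h⟩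

/-- The "private super domination" condition alone implies being a super dominating set. -/
lemma sds_of_priv {V : Type*} (H : SimpleGraph V) (S : Finset V)
    (h : ∀ u ∉ S, ∃ w ∈ S, ∀ x, (H.Adj w x ∧ x ∉ S) ↔ x = u) :
    IsSuperDominatingSet H S := by
  refine ⟨fun u hu => ?_, h⟩
  obtain ⟨w, hw, hp⟩ := h u hu
  exact ⟨w, hw, ((hp u).mpr rfl).1⟩

/-- if `v` is a vertex of `G` with `deg(v) ≥ 2`, then
`γ_sp(G ⊙ v) ≤ γ_sp(G) + ⌊deg(v)/2⌋ - 1`. -/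
theorem stmt_8 {V : Type*} [Fintype V] (G : SimpleGraph V) (v : V)
    (hv : 2 ≤ (G.neighborSet v).ncard) :
    superDominationNumber (odot G v) ≤
      superDominationNumber G + (G.neighborSet v).ncard / 2 - 1 := by
  classical
  set d := (G.neighborSet v).ncard with hd
  -- the defining set for G is nonempty (take S = univ)
  have hne : {n | ∃ S : Finset V, IsSuperDominatingSet G S ∧ S.card = n}.Nonempty :=
    ⟨_, Finset.univ, ⟨fun u hu => absurd (Finset.mem_univ u) hu,
        fun u hu => absurd (Finset.mem_univ u) hu⟩, rfl⟩
  have hmem := Nat.sInf_mem hne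
  obtain ⟨S, hS, hScard⟩ := hmem
  have hScard' : S.card = superDominationNumber G := hScard
  -- upper bound machinery for G ⊙ v
  have hbound : ∀ T : Finset V,
      (∀ u ∉ T, ∃ w ∈ T, ∀ x, ((odot G v).Adj w x ∧ x ∉ T) ↔ x = u) →
      superDominationNumber (odot G v) ≤ T.card := by
    intro T hT
    have : T.card ∈ {n | ∃ S : Finset V, IsSuperDominatingSet (odot G v) S ∧ S.card = n} :=
      ⟨T, sds_of_priv _ _ hT, rfl⟩
    exact Nat.sInf_le this
  -- choose the private dominator function f
  have hf0 : ∀ u, ∃ w, u ∉ S → w ∈ S ∧ ∀ x, (G.Adj w x ∧ x ∉ S) ↔ x = u := by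
    intro u
    by_cases hu : u ∈ S
    · exact ⟨u, fun h => absurd hu h⟩
    · obtain ⟨w, hw, hp⟩ := hS.2 u hu
      exact ⟨w, fun _ => ⟨hw, hp⟩⟩
  choose f hfp using hf0
  have hfS : ∀ u, u ∉ S → f u ∈ S := fun u hu => (hfp u hu).1
  have hpriv : ∀ u, u ∉ S → ∀ x, (G.Adj (f u) x ∧ x ∉ S) ↔ x = u :=
    fun u hu => (hfp u hu).2
  have hadj : ∀ u, u ∉ S → G.Adj (f u) u := fun u hu => ((hpriv u hu u).mpr rfl).1
  have hinj : ∀ u, u ∉ S → ∀ u', u' ∉ S → f u = f u' → u = u' := by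
    intro u hu u' hu' he
    have hx : G.Adj (f u) u' := he ▸ hadj u' hu'
    exact ((hpriv u hu u').mp ⟨hx, hu'⟩).symm
  -- the neighborhood as a Finset
  set NF : Finset V := Finset.univ.filter (fun x => G.Adj v x) with hNF
  have hNFmem : ∀ x, x ∈ NF ↔ G.Adj v x := by
    intro x; simp [hNF]
  have hdNF : NF.card = d := by
    rw [hd]
    have hset : G.neighborSet v = (↑NF : Set V) := by
      ext x; simp [hNF, SimpleGraph.mem_neighborSet]
    rw [hset, Set.ncard_coe_finset]
  -- the set of "bad pairs inside N(v)"
  set U : Finset V := Finset.univ.filter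
      (fun u => u ∉ S ∧ G.Adj v u ∧ G.Adj v (f u)) with hU
  have hUmem : ∀ u, u ∈ U ↔ (u ∉ S ∧ G.Adj v u ∧ G.Adj v (f u)) := by
    intro u; simp [hU]
  have hOadj : ∀ a b, (odot G v).Adj a b ↔ (G.Adj a b ∧ ¬(G.Adj v a ∧ G.Adj v b)) :=
    fun a b => Iff.rfl
  have hd2 : 1 ≤ d / 2 := by omega
  by_cases hvS : v ∈ S
  · -- v ∈ S : count 2k ≤ d
    have hUsub : U ⊆ NF := by
      intro u hu
      exact (hNFmem u).mpr ((hUmem u).mp hu).2.1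
    have hUim : U.image f ⊆ NF := by
      intro x hx
      obtain ⟨u, hu, rfl⟩ := Finset.mem_image.mp hx
      exact (hNFmem _).mpr ((hUmem u).mp hu).2.2
    have hdisj : Disjoint U (U.image f) := by
      rw [Finset.disjoint_left]
      intro x hxU hxim
      obtain ⟨u, hu, he⟩ := Finset.mem_image.mp hxim
      exact ((hUmem x).mp hxU).1 (he ▸ hfS u ((hUmem u).mp hu).1)
    have hcardim : (U.image f).card = U.card :=
      Finset.card_image_of_injOn (fun a ha b hb he =>
        hinj a ((hUmem a).mp ha).1 b ((hUmem b).mp hb).1 he)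
    have h2k : 2 * U.card ≤ d := by
      have h1 : (U ∪ U.image f).card = 2 * U.card := by
        rw [Finset.card_union_of_disjoint hdisj, hcardim]; ring
      have h2 : (U ∪ U.image f).card ≤ NF.card :=
        Finset.card_le_card (Finset.union_subset hUsub hUim)
      omega
    by_cases hk : U.card < d / 2
    · -- Case 2a : T = S ∪ U
      have hT : ∀ u ∉ S ∪ U, ∃ w ∈ S ∪ U,
          ∀ x, ((odot G v).Adj w x ∧ x ∉ S ∪ U) ↔ x = u := by
        intro u hu
        have hu1 : u ∉ S := fun h => hu (Finset.mem_union_left _ h)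
        have hu2 : u ∉ U := fun h => hu (Finset.mem_union_right _ h)
        refine ⟨f u, Finset.mem_union_left _ (hfS u hu1), fun x => ?_⟩
        constructor
        · rintro ⟨⟨hx1, _⟩, hx2⟩
          have hx3 : x ∉ S := fun h => hx2 (Finset.mem_union_left _ h)
          exact (hpriv u hu1 x).mp ⟨hx1, hx3⟩
        · intro hxe; rw [hxe]
          refine ⟨⟨hadj u hu1, ?_⟩, hu⟩
          rintro ⟨h1, h2⟩
          exact hu2 ((hUmem u).mpr ⟨hu1, h2, h1⟩)
      have hcard : (S ∪ U).card ≤ S.card + U.card := Finset.card_union_le _ _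
      have := hbound _ hT
      omega
    · -- k = d / 2
      have hkle : U.card ≤ d / 2 := by omega
      have hkeq : U.card = d / 2 := le_antisymm hkle (by omega)
      have hUne : U.Nonempty := Finset.card_pos.mp (by omega)
      by_cases ha : ∃ a, a ∉ S ∧ a ∉ U ∧ G.Adj v (f a)
      · -- Case 2c
        obtain ⟨a₀, ha1, ha2, ha3⟩ := ha
        have hfa₀S : f a₀ ∈ S := hfS a₀ ha1
        set P : Finset V := (U ∪ U.image f) ∪ {f a₀} with hP
        have hPsub : P ⊆ NF := by
          intro x hx
          rcases Finset.mem_union.mp hx with hx | hx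
          · rcases Finset.mem_union.mp hx with hx | hx
            · exact hUsub hx
            · exact hUim hx
          · rw [Finset.mem_singleton.mp hx]
            exact (hNFmem _).mpr ha3
        have hfa₀notin : f a₀ ∉ U ∪ U.image f := by
          intro hx
          rcases Finset.mem_union.mp hx with hx | hx
          · exact ((hUmem _).mp hx).1 hfa₀S
          · obtain ⟨u, hu, he⟩ := Finset.mem_image.mp hx
            exact ha2 (hinj u ((hUmem u).mp hu).1 a₀ ha1 he ▸ hu)
        have hPcard : P.card = 2 * U.card + 1 := by
          rw [hP, Finset.card_union_of_disjoint (Finset.disjoint_singleton_right.mpr hfa₀notin),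
            Finset.card_union_of_disjoint hdisj, hcardim, Finset.card_singleton]
          ring
        have hPeq : P = NF := by
          apply Finset.eq_of_subset_of_card_le hPsub
          omega
        have hkey : ∀ x, G.Adj v x → x ∉ S → x ∈ U := by
          intro x hx1 hx2
          have hxNF : x ∈ NF := (hNFmem x).mpr hx1
          rw [← hPeq] at hxNF
          rcases Finset.mem_union.mp hxNF with hx | hx
          · rcases Finset.mem_union.mp hx with hx | hx
            · exact hx
            · obtain ⟨u, hu, he⟩ := Finset.mem_image.mp hx
              exact absurd (he ▸ hfS u ((hUmem u).mp hu).1) hx2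
          · exact absurd (Finset.mem_singleton.mp hx ▸ hfa₀S) hx2
        obtain ⟨u₀, hu₀⟩ := hUne
        have hu₀p := (hUmem u₀).mp hu₀
        have hT : ∀ u ∉ S ∪ U.erase u₀, ∃ w ∈ S ∪ U.erase u₀,
            ∀ x, ((odot G v).Adj w x ∧ x ∉ S ∪ U.erase u₀) ↔ x = u := by
          intro u hu
          have hu1 : u ∉ S := fun h => hu (Finset.mem_union_left _ h)
          have hu2 : u ∉ U.erase u₀ := fun h => hu (Finset.mem_union_right _ h)
          by_cases h0 : u = u₀
          · rw [h0] at hu ⊢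
            refine ⟨v, Finset.mem_union_left _ hvS, fun x => ?_⟩
            constructor
            · rintro ⟨⟨hx1, _⟩, hx2⟩
              have hx3 : x ∉ S := fun h => hx2 (Finset.mem_union_left _ h)
              have hxU : x ∈ U := hkey x hx1 hx3
              by_contra hne'
              exact hx2 (Finset.mem_union_right _ (Finset.mem_erase.mpr ⟨hne', hxU⟩))
            · intro hxe; rw [hxe]
              exact ⟨⟨hu₀p.2.1, fun ⟨h1, _⟩ => G.loopless.irrefl v h1⟩, hu⟩
          · have hu3 : u ∉ U := fun h => hu2 (Finset.mem_erase.mpr ⟨h0, h⟩)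
            refine ⟨f u, Finset.mem_union_left _ (hfS u hu1), fun x => ?_⟩
            constructor
            · rintro ⟨⟨hx1, _⟩, hx2⟩
              have hx3 : x ∉ S := fun h => hx2 (Finset.mem_union_left _ h)
              exact (hpriv u hu1 x).mp ⟨hx1, hx3⟩
            · intro hxe; rw [hxe]
              refine ⟨⟨hadj u hu1, ?_⟩, hu⟩
              rintro ⟨h1, h2⟩
              exact hu3 ((hUmem u).mpr ⟨hu1, h2, h1⟩)
        have hcard : (S ∪ U.erase u₀).card ≤ S.card + (U.card - 1) := by
          have h1 : (S ∪ U.erase u₀).card ≤ S.card + (U.erase u₀).card :=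
            Finset.card_union_le _ _
          have h2 : (U.erase u₀).card = U.card - 1 := Finset.card_erase_of_mem hu₀
          omega
        have := hbound _ hT
        have hk1 : 1 ≤ U.card := Finset.card_pos.mpr ⟨u₀, hu₀⟩
        omega
      · -- Case 2b
        push_neg at ha
        obtain ⟨u₁, hu₁⟩ := hUne
        have hu₁p := (hUmem u₁).mp hu₁
        have hfu₁ne : f u₁ ≠ v := fun he => G.loopless.irrefl v (he ▸ hu₁p.2.2)
        have hfneqv : ∀ a, a ∉ S → a ∉ U → f a ≠ v := by
          intro a ha1 ha2 he
          have : u₁ = a := (hpriv a ha1 u₁).mp ⟨he ▸ hu₁p.2.1, hu₁p.1⟩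
          exact ha2 (this ▸ hu₁)
        have hT : ∀ u ∉ S.erase v ∪ U, ∃ w ∈ S.erase v ∪ U,
            ∀ x, ((odot G v).Adj w x ∧ x ∉ S.erase v ∪ U) ↔ x = u := by
          intro u hu
          have hu1 : u ∉ S.erase v := fun h => hu (Finset.mem_union_left _ h)
          have hu2 : u ∉ U := fun h => hu (Finset.mem_union_right _ h)
          by_cases h0 : u = v
          · rw [h0] at hu ⊢
            refine ⟨f u₁, Finset.mem_union_left _
              (Finset.mem_erase.mpr ⟨hfu₁ne, hfS u₁ hu₁p.1⟩), fun x => ?_⟩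
            constructor
            · rintro ⟨⟨hx1, _⟩, hx2⟩
              by_cases hxS : x ∈ S
              · by_contra hne'
                exact hx2 (Finset.mem_union_left _ (Finset.mem_erase.mpr ⟨hne', hxS⟩))
              · have : x = u₁ := (hpriv u₁ hu₁p.1 x).mp ⟨hx1, hxS⟩
                exact absurd (Finset.mem_union_right _ (this ▸ hu₁)) hx2
            · intro hxe; rw [hxe]
              refine ⟨⟨hu₁p.2.2.symm, fun ⟨_, h2⟩ => G.loopless.irrefl v h2⟩, hu⟩
          · have hu3 : u ∉ S := by
              intro h
              exact hu1 (Finset.mem_erase.mpr ⟨h0, h⟩)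
            refine ⟨f u, Finset.mem_union_left _
              (Finset.mem_erase.mpr ⟨hfneqv u hu3 hu2, hfS u hu3⟩), fun x => ?_⟩
            constructor
            · rintro ⟨⟨hx1, _⟩, hx2⟩
              by_cases hxS : x ∈ S
              · have hxv : x = v := by
                  by_contra hne'
                  exact hx2 (Finset.mem_union_left _ (Finset.mem_erase.mpr ⟨hne', hxS⟩))
                exact absurd (hxv ▸ hx1).symm (ha u hu3 hu2)
              · exact (hpriv u hu3 x).mp ⟨hx1, hxS⟩
            · intro hxe; rw [hxe]
              refine ⟨⟨hadj u hu3, ?_⟩, hu⟩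
              rintro ⟨h1, _⟩
              exact ha u hu3 hu2 h1
        have hcard : (S.erase v ∪ U).card ≤ (S.card - 1) + U.card := by
          have h1 : (S.erase v ∪ U).card ≤ (S.erase v).card + U.card :=
            Finset.card_union_le _ _
          have h2 : (S.erase v).card = S.card - 1 := Finset.card_erase_of_mem hvS
          omega
        have := hbound _ hT
        have hS1 : 1 ≤ S.card := Finset.card_pos.mpr ⟨v, hvS⟩
        omega
  · -- Case 1 : v ∉ S, use S itself
    have hT : ∀ u ∉ S, ∃ w ∈ S, ∀ x, ((odot G v).Adj w x ∧ x ∉ S) ↔ x = u := by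
      intro u hu
      refine ⟨f u, hfS u hu, fun x => ?_⟩
      constructor
      · rintro ⟨⟨hx1, _⟩, hx2⟩
        exact (hpriv u hu x).mp ⟨hx1, hx2⟩
      · intro hxe; rw [hxe]
        refine ⟨⟨hadj u hu, ?_⟩, hu⟩
        rintro ⟨h1, h2⟩
        have hvu : v = u := (hpriv u hu v).mp ⟨h1.symm, hvS⟩
        exact G.loopless.irrefl v (hvu ▸ h2)
    have := hbound _ hT
    omega
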